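/- Let q be a self-join-free Boolean conjunctive query. If atom F attacks atom G and G attacks atom H in the attack graph of q, then F attacks H or G attacks F (or both). -/

import Mathlib

/-- A fact `R(a₁,…,aₙ)`: relation name, primary-key values, non-key values. -/
structure DBFact where
  rel : ℕ
  key : List ℕ
  rest : List ℕ
deriving DecidableEq

/-- Two facts are key-equal if they have the same relation name and primary-key value. -/
def keyEq (A B : DBFact) : Prop := A.rel = B.rel ∧ A.key = B.key

instance (A B : DBFact) : Decidable (keyEq A B) :=
  inferInstanceAs (Decidable (_ ∧ _))

/-- A set of facts is consistent if it contains no two distinct key-equal facts. -/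
def Consistent (s : Finset DBFact) : Prop := ∀ A ∈ s, ∀ B ∈ s, keyEq A B → A = B

/-- A repair of `db` is a maximal (w.r.t. ⊆) consistent subset of `db`. -/
def Repair (db r : Finset DBFact) : Prop :=
  r ⊆ db ∧ Consistent r ∧ ∀ r', r' ⊆ db → Consistent r' → r ⊆ r' → r = r'

/-- A term is a variable (inl) or a constant (inr). -/
abbrev Term := ℕ ⊕ ℕ

/-- An atom `R(t₁,…,tₙ)` with key positions and non-key positions. -/
structure Atom where
  rel : ℕ
  key : List Term
  rest : List Term
deriving DecidableEq

def termVars (l : List Term) : Finset ℕ := (l.filterMap fun t => t.getLeft?).toFinset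

/-- Variables at primary-key positions of an atom. -/
def keyVars (F : Atom) : Finset ℕ := termVars F.key

/-- All variables of an atom. -/
def atomVars (F : Atom) : Finset ℕ := termVars F.key ∪ termVars F.rest

/-- A query (finite set of atoms) is self-join-free: no relation name occurs twice. -/
def SJF (q : Finset Atom) : Prop := ∀ F ∈ q, ∀ G ∈ q, F.rel = G.rel → F = G

/-- Apply a valuation (total map from variables to constants) to an atom, yielding a fact. -/
def applyVal (θ : ℕ → ℕ) (F : Atom) : DBFact :=
  ⟨F.rel, F.key.map (Sum.elim θ id), F.rest.map (Sum.elim θ id)⟩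

/-- Semantic implication of a functional dependency `X → Y` by a set of FDs
(two-tuple semantics, which is equivalent to the standard one for FDs). -/
def FDImplies (fds : Set (Set ℕ × Set ℕ)) (X Y : Set ℕ) : Prop :=
  ∀ θ μ : ℕ → ℕ,
    (∀ p ∈ fds, (∀ v ∈ p.1, θ v = μ v) → ∀ v ∈ p.2, θ v = μ v) →
    (∀ v ∈ X, θ v = μ v) → ∀ v ∈ Y, θ v = μ v

/-- `FD(q) = { key(F) → vars(F) : F ∈ q }`. -/
def FDs (q : Finset Atom) : Set (Set ℕ × Set ℕ) :=
  {p | ∃ F ∈ q, p = ((keyVars F : Set ℕ), (atomVars F : Set ℕ))}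

/-- `F⁺ = { x : FD(q \ {F}) ⊨ key(F) → x }`. -/
def plus (q : Finset Atom) (F : Atom) : Set ℕ :=
  {x | FDImplies (FDs (q.erase F)) (keyVars F : Set ℕ) {x}}

/-- One step of a witness for an attack by `F`: consecutive atoms share a variable outside `F⁺`. -/
def AttackStep (q : Finset Atom) (F : Atom) (A B : Atom) : Prop :=
  ¬ ((atomVars A ∩ atomVars B : Finset ℕ) : Set ℕ) ⊆ plus q F

/-- `F` attacks `G` in the attack graph of `q`. -/
def Attacks (q : Finset Atom) (F G : Atom) : Prop :=
  F ≠ G ∧ F ∈ q ∧ ∃ L : List Atom, (∀ A ∈ L, A ∈ q) ∧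
    List.Chain (AttackStep q F) F L ∧ (F :: L).getLast (List.cons_ne_nil F L) = G

/-- `F` attacks the variable `z`. -/
def AttacksVar (q : Finset Atom) (F : Atom) (z : ℕ) : Prop :=
  z ∉ plus q F ∧ F ∈ q ∧ ∃ L : List Atom, (∀ A ∈ L, A ∈ q) ∧
    List.Chain (AttackStep q F) F L ∧ z ∈ atomVars ((F :: L).getLast (List.cons_ne_nil F L))

/-- `r ⊨ ζ(q)` for a valuation `ζ` over the variable set `X`. -/
def Sat (r : Finset DBFact) (q : Finset Atom) (X : Finset ℕ) (ζ : ℕ → ℕ) : Prop :=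
  ∃ θ : ℕ → ℕ, (∀ v ∈ X, θ v = ζ v) ∧ ∀ F ∈ q, applyVal θ F ∈ r

/-- `r ⊨ q`. -/
def Sat0 (r : Finset DBFact) (q : Finset Atom) : Prop :=
  ∃ θ : ℕ → ℕ, ∀ F ∈ q, applyVal θ F ∈ r

/-- A fact `A` is relevant for `q` in `r` if `A ∈ θ(q) ⊆ r` for some valuation `θ`. -/
def Relevant (A : DBFact) (q : Finset Atom) (r : Finset DBFact) : Prop :=
  ∃ θ : ℕ → ℕ, (∃ F ∈ q, applyVal θ F = A) ∧ ∀ F ∈ q, applyVal θ F ∈ r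

namespace AQTaux

/-- Inductive (syntactic) closure of a set of variables under a set of FDs. -/
inductive InCl (fds : Set (Set ℕ × Set ℕ)) (X : Set ℕ) : ℕ → Prop
  | base {x} : x ∈ X → InCl fds X x
  | step {p : Set ℕ × Set ℕ} {x} : p ∈ fds → (∀ v ∈ p.1, InCl fds X v) → x ∈ p.2 →
      InCl fds X x

lemma inCl_implies {fds : Set (Set ℕ × Set ℕ)} {X : Set ℕ} {x : ℕ}
    (h : InCl fds X x) : FDImplies fds X {x} := by
  induction h with
  | base hx =>
    intro θ μ hfd hX v hv
    rcases hv with rfl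
    exact hX _ hx
  | step hp hmem hx ih =>
    intro θ μ hfd hX v hv
    rcases hv with rfl
    exact hfd _ hp (fun w hw => ih w hw θ μ hfd hX w rfl) _ hx

lemma implies_inCl {fds : Set (Set ℕ × Set ℕ)} {X : Set ℕ} {x : ℕ}
    (h : FDImplies fds X {x}) : InCl fds X x := by
  classical
  have key := h (fun _ => 0) (fun v => if InCl fds X v then 0 else 1)
    (by
      intro p hp hpre v hv
      have h1 : ∀ w ∈ p.1, InCl fds X w := by
        intro w hw
        have := hpre w hw
        by_contra hc
        simp [hc] at this
      have : InCl fds X v := InCl.step hp h1 hv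
      simp [this])
    (by
      intro v hv
      simp [InCl.base hv]) x rfl
  by_contra hc
  simp [hc] at key

lemma mem_plus_iff {q : Finset Atom} {F : Atom} {x : ℕ} :
    x ∈ plus q F ↔ InCl (FDs (q.erase F)) ((keyVars F : Set ℕ)) x :=
  ⟨implies_inCl, inCl_implies⟩

lemma keyVars_subset_atomVars (F : Atom) : keyVars F ⊆ atomVars F :=
  Finset.subset_union_left

lemma chain_concat {α : Type*} {R : α → α → Prop} :
    ∀ {l : List α} {a e : α}, List.Chain R a l →
      R ((a :: l).getLast (List.cons_ne_nil a l)) e → List.Chain R a (l ++ [e])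
  | [], a, e => fun _ h => List.Chain.cons (by simpa using h) List.Chain.nil
  | b :: t, a, e => fun hc h => by
    rcases hc with _ | _ | ⟨hab, ht⟩
    exact List.Chain.cons hab
      (chain_concat ht (by rwa [List.getLast_cons (List.cons_ne_nil b t)] at h))

lemma chain_append {α : Type*} {R : α → α → Prop} :
    ∀ {l₁ : List α} {a : α} {l₂ : List α}, List.Chain R a l₁ →
      List.Chain R ((a :: l₁).getLast (List.cons_ne_nil a l₁)) l₂ →
      List.Chain R a (l₁ ++ l₂)
  | [], a, l₂ => fun _ h => by simpa using h
  | b :: t, a, l₂ => fun hc h => by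
    rcases hc with _ | _ | ⟨hab, ht⟩
    exact List.Chain.cons hab
      (chain_append ht (by rwa [List.getLast_cons (List.cons_ne_nil b t)] at h))

lemma last_step {α : Type*} {R : α → α → Prop} :
    ∀ {l : List α} {a : α}, List.Chain R a l → l ≠ [] →
      ∃ b, R b ((a :: l).getLast (List.cons_ne_nil a l))
  | [], _ => fun _ h => absurd rfl h
  | [b], a => fun hc _ => by
    rcases hc with _ | _ | ⟨hab, _⟩
    exact ⟨a, by simpa using hab⟩
  | b :: c :: t, a => fun hc _ => by
    rcases hc with _ | _ | ⟨hab, ht⟩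
    obtain ⟨d, hd⟩ := last_step ht (List.cons_ne_nil c t)
    exact ⟨d, by rwa [List.getLast_cons (List.cons_ne_nil b (c :: t))]⟩

/-- Extend a variable attack through an atom `E` containing the attacked variable. -/
lemma attVar_extend {q : Finset Atom} {G E : Atom} (hE : E ∈ q) {x y : ℕ}
    (h : AttacksVar q G x) (hxE : x ∈ atomVars E) (hy : y ∈ atomVars E)
    (hyp : y ∉ plus q G) : AttacksVar q G y := by
  obtain ⟨hxp, hGq, L, hLq, hch, hxl⟩ := h
  refine ⟨hyp, hGq, L ++ [E], ?_, ?_, ?_⟩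
  · intro B hB
    rcases List.mem_append.mp hB with hB | hB
    · exact hLq B hB
    · rcases List.mem_singleton.mp hB with rfl; exact hE
  · refine chain_concat hch ?_
    intro hsub
    exact hxp (hsub (by simp [Finset.mem_inter, hxl, hxE]))
  · have : (G :: (L ++ [E])) = (G :: L) ++ [E] := by simp
    rw [List.getLast_congr _ (by simp) this, List.getLast_append_singleton]
    exact hy

/-- If `G` attacks a variable of `F`, then `G` attacks `F`. -/
lemma attVar_attacks {q : Finset Atom} {G F : Atom} (hF : F ∈ q) (hne : G ≠ F)
    {x : ℕ} (h : AttacksVar q G x) (hxF : x ∈ atomVars F) : Attacks q G F := by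
  obtain ⟨hxp, hGq, L, hLq, hch, hxl⟩ := h
  refine ⟨hne, hGq, L ++ [F], ?_, ?_, ?_⟩
  · intro B hB
    rcases List.mem_append.mp hB with hB | hB
    · exact hLq B hB
    · rcases List.mem_singleton.mp hB with rfl; exact hF
  · refine chain_concat hch ?_
    intro hsub
    exact hxp (hsub (by simp [Finset.mem_inter, hxl, hxF]))
  · have : (G :: (L ++ [F])) = (G :: L) ++ [F] := by simp
    rw [List.getLast_congr _ (by simp) this, List.getLast_append_singleton]

/-- Core induction: a `G`-attacked variable in `F⁺` forces (absent `G ⇝ F`)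
`key(G) ⊆ F⁺`. -/
lemma main2 {q : Finset Atom} {F G : Atom} (hFq : F ∈ q) (hGq : G ∈ q)
    (hFG : F ≠ G) (hnGF : ¬ Attacks q G F) {x : ℕ}
    (hx : InCl (FDs (q.erase F)) ((keyVars F : Set ℕ)) x)
    (hAx : AttacksVar q G x) : ((keyVars G : Set ℕ)) ⊆ plus q F := by
  induction hx with
  | base hxk =>
    exact absurd (attVar_attacks hFq (Ne.symm hFG) hAx
      (keyVars_subset_atomVars F hxk)) hnGF
  | @step p x hp hmem hx ih =>
    obtain ⟨E, hEe, rfl⟩ := hp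
    have hEq : E ∈ q := Finset.mem_of_mem_erase hEe
    have hEF : E ≠ F := (Finset.mem_erase.mp hEe).1
    by_cases hEG : E = G
    · subst hEG
      intro v hv
      exact mem_plus_iff.mpr (hmem v hv)
    · by_cases hall : ((keyVars E : Set ℕ)) ⊆ plus q G
      · exfalso
        apply hAx.1
        refine mem_plus_iff.mpr (InCl.step (p := ((keyVars E : Set ℕ), (atomVars E : Set ℕ)))
          ⟨E, Finset.mem_erase.mpr ⟨hEG, hEq⟩, rfl⟩ ?_ hx)
        intro v hv
        exact mem_plus_iff.mp (hall hv)
      · obtain ⟨y, hyk, hyp⟩ := Set.not_subset.mp hall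
        exact ih y hyk (attVar_extend hEq hAx hx (keyVars_subset_atomVars E hyk) hyp)

/-- Walking along a `G`-attack chain: either it is entirely `F`-valid, or it yields
a variable in `F⁺` attacked by `G`. -/
lemma attack_case {q : Finset Atom} {F G : Atom} (hGq : G ∈ q) :
    ∀ (L : List Atom) (A : Atom), (∀ B ∈ L, B ∈ q) → A ∈ q →
      List.Chain (AttackStep q G) A L →
      (∃ L0 : List Atom, (∀ B ∈ L0, B ∈ q) ∧ List.Chain (AttackStep q G) G L0 ∧
        (G :: L0).getLast (List.cons_ne_nil G L0) = A) →
      List.Chain (AttackStep q F) A L ∨ ∃ x, x ∈ plus q F ∧ AttacksVar q G x := by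
  intro L
  induction L with
  | nil => intro A _ _ _ _; exact Or.inl List.Chain.nil
  | cons c t ih =>
    intro A hLq hAq hch hreach
    rcases hch with _ | _ | ⟨hAc, ht⟩
    by_cases hF : AttackStep q F A c
    · have hcq : c ∈ q := hLq c List.mem_cons_self
      have hreach' : ∃ L0 : List Atom, (∀ B ∈ L0, B ∈ q) ∧
          List.Chain (AttackStep q G) G L0 ∧
          (G :: L0).getLast (List.cons_ne_nil G L0) = c := by
        obtain ⟨L0, hL0q, hch0, hl0⟩ := hreach
        refine ⟨L0 ++ [c], ?_, chain_concat hch0 (hl0 ▸ hAc), ?_⟩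
        · intro B hB
          rcases List.mem_append.mp hB with hB | hB
          · exact hL0q B hB
          · rcases List.mem_singleton.mp hB with rfl; exact hcq
        · have : (G :: (L0 ++ [c])) = (G :: L0) ++ [c] := by simp
          rw [List.getLast_congr _ (by simp) this, List.getLast_append_singleton]
      rcases ih c (fun B hB => hLq B (List.mem_cons_of_mem c hB)) hcq ht hreach' with
        h | h
      · exact Or.inl (List.Chain.cons hF h)
      · exact Or.inr h
    · obtain ⟨x, hxm, hxp⟩ := Set.not_subset.mp hAc
      refine Or.inr ⟨x, ?_, ?_⟩
      · have hsub : ((atomVars A ∩ atomVars c : Finset ℕ) : Set ℕ) ⊆ plus q F :=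
          not_not.mp hF
        exact hsub hxm
      · obtain ⟨L0, hL0q, hch0, hl0⟩ := hreach
        have hxA : x ∈ atomVars A := (Finset.mem_inter.mp hxm).1
        exact ⟨hxp, hGq, L0, hL0q, hch0, hl0 ▸ hxA⟩

end AQTaux


/-- If `F` attacks `G` and `G` attacks `H`, then `F` attacks `H` or `G` attacks `F`. -/
theorem attack_quasi_transitive (q : Finset Atom) (hq : SJF q) (F G H : Atom)
    (h1 : Attacks q F G) (h2 : Attacks q G H) :
    Attacks q F H ∨ Attacks q G F := by
  classical
  by_cases hFH : F = H
  · exact Or.inr (hFH ▸ h2)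
  by_cases hA : Attacks q F H
  · exact Or.inl hA
  by_cases hB : Attacks q G F
  · exact Or.inr hB
  exfalso
  obtain ⟨hFG, hFq, L1, hL1q, hch1, hlast1⟩ := h1
  obtain ⟨hGH, hGq, L2, hL2q, hch2, hlast2⟩ := h2
  rcases AQTaux.attack_case (F := F) hGq L2 G hL2q hGq hch2
      ⟨[], by simp, List.Chain.nil, rfl⟩ with hchF | ⟨x, hxF, hAx⟩
  · -- then F attacks H, contradiction
    apply hA
    have hL2ne : L2 ≠ [] := by
      intro h
      subst h
      exact hGH (by simpa using hlast2)
    refine ⟨hFH, hFq, L1 ++ L2, ?_, ?_, ?_⟩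
    · intro B hB
      rcases List.mem_append.mp hB with hB | hB
      exacts [hL1q B hB, hL2q B hB]
    · exact AQTaux.chain_append hch1 (by rw [hlast1]; exact hchF)
    · have h1' : (F :: (L1 ++ L2)).getLast (List.cons_ne_nil _ _) = L2.getLast hL2ne :=
        List.getLast_append_of_ne_nil (l := F :: L1) (List.cons_ne_nil _ _) hL2ne
      rw [h1', ← List.getLast_cons hL2ne]
      exact hlast2
  · -- then key(G) ⊆ F⁺, hence vars(G) ⊆ F⁺, contradicting the last step of F ⇝ G
    have hkG := AQTaux.main2 hFq hGq hFG hB (AQTaux.mem_plus_iff.mp hxF) hAx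
    have hvG : ((atomVars G : Finset ℕ) : Set ℕ) ⊆ plus q F := by
      intro v hv
      exact AQTaux.mem_plus_iff.mpr (AQTaux.InCl.step
        (p := ((keyVars G : Set ℕ), (atomVars G : Set ℕ)))
        ⟨G, Finset.mem_erase.mpr ⟨Ne.symm hFG, hGq⟩, rfl⟩
        (fun w hw => AQTaux.mem_plus_iff.mp (hkG hw)) hv)
    have hL1ne : L1 ≠ [] := by
      intro h
      subst h
      exact hFG (by simpa using hlast1)
    obtain ⟨A, hst⟩ := AQTaux.last_step hch1 hL1ne
    rw [hlast1] at hst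
    exact hst (fun v hv =>
      hvG (Finset.mem_coe.mpr ((Finset.mem_inter.mp (Finset.mem_coe.mp hv)).2)))
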